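/- Let ω ∈ ℝⁿ satisfy |k·ω| > 0 for all nonzero k ∈ ℤⁿ with |k|₁ ≤ 2r, and let f(p,q) = Σ_{m=1}^n Σ_{0<|k|₁≤2r} c_{m,k} p_m e^{i k·q} be linear in p with zero angular average. Then χ₂(p,q) = Σ_{m,k} −c_{m,k} p_m e^{i k·q}/(i k·ω) solves {χ₂, ω·p} + f = 0, and the partial derivatives satisfy max_m ‖∂χ₂/∂p_m‖ ≤ ‖f‖ / min_{0<|k|₁≤2r}|k·ω| and max_m ‖∂χ₂/∂q_m‖ ≤ 2r ‖f‖ / min_{0<|k|₁≤2r}|k·ω|. -/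

import Mathlib

/- Taylor–Fourier polynomials: finitely supported real coefficients indexed by
   (power of p, Fourier harmonic k, cos/sin). -/
abbrev TFIdx (n : ℕ) := (Fin n →₀ ℕ) × (Fin n →₀ ℤ) × Bool
abbrev TF (n : ℕ) := TFIdx n →₀ ℝ

noncomputable def tfNorm {n : ℕ} (g : TF n) : ℝ := g.sum fun _ a => |a|

/-- Formal partial derivative ∂/∂q_i on coefficients. -/
noncomputable def tfDq {n : ℕ} (i : Fin n) (g : TF n) : TF n :=
  g.sum fun m a =>
    if m.2.2 then Finsupp.single (m.1, m.2.1, false) (-(a * (m.2.1 i : ℝ)))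
    else Finsupp.single (m.1, m.2.1, true) (a * (m.2.1 i : ℝ))

/-- Formal partial derivative ∂/∂p_i on coefficients. -/
noncomputable def tfDp {n : ℕ} (i : Fin n) (g : TF n) : TF n :=
  g.sum fun m a =>
    Finsupp.single (m.1 - Finsupp.single i 1, m.2.1, m.2.2) (a * (m.1 i : ℝ))

/-- Degree in the actions p. -/
def pdeg {n : ℕ} (m : TFIdx n) : ℕ := m.1.sum fun _ e => e

def tfFlip {n : ℕ} (m : TFIdx n) : TFIdx n := (m.1, m.2.1, !m.2.2)
noncomputable def tfSgn {n : ℕ} (m : TFIdx n) : ℝ := if m.2.2 then 1 else -1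

lemma tfFlip_flip {n : ℕ} (m : TFIdx n) : tfFlip (tfFlip m) = m := by
  obtain ⟨ν, k, b⟩ := m; simp [tfFlip]

lemma tfFlip_inj {n : ℕ} : Function.Injective (tfFlip (n := n)) :=
  Function.LeftInverse.injective tfFlip_flip

lemma abs_tfSgn {n : ℕ} (m : TFIdx n) : |tfSgn m| = 1 := by
  rw [tfSgn]; split_ifs <;> simp

lemma tfNorm_nonneg {n : ℕ} (g : TF n) : 0 ≤ tfNorm g :=
  Finset.sum_nonneg fun _ _ => abs_nonneg _

lemma tfNorm_eq_sum {n : ℕ} (g : TF n) {s : Finset (TFIdx n)} (hs : g.support ⊆ s) :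
    tfNorm g = ∑ a ∈ s, |g a| :=
  Finsupp.sum_of_support_subset g hs _ (fun _ _ => abs_zero)

lemma tfNorm_add_le {n : ℕ} (x y : TF n) : tfNorm (x + y) ≤ tfNorm x + tfNorm y := by
  classical
  rw [tfNorm_eq_sum (x + y) (Finsupp.support_add),
    tfNorm_eq_sum x (Finset.subset_union_left),
    tfNorm_eq_sum y (Finset.subset_union_right), ← Finset.sum_add_distrib]
  exact Finset.sum_le_sum fun a _ => by simpa using abs_add_le (x a) (y a)

lemma tfNorm_zero {n : ℕ} : tfNorm (0 : TF n) = 0 := by simp [tfNorm]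

lemma tfNorm_sum_le {n : ℕ} {ι : Type*} (s : Finset ι) (h : ι → TF n) :
    tfNorm (∑ b ∈ s, h b) ≤ ∑ b ∈ s, tfNorm (h b) := by
  classical
  induction s using Finset.cons_induction with
  | empty => simp [tfNorm_zero]
  | cons a s ha ih =>
      rw [Finset.sum_cons, Finset.sum_cons]
      exact le_trans (tfNorm_add_le _ _) (by linarith [ih])

lemma tfNorm_single_le {n : ℕ} (m : TFIdx n) (a : ℝ) : tfNorm (Finsupp.single m a) ≤ |a| := by
  by_cases h : a = 0
  · simp [h, tfNorm_zero]
  · rw [tfNorm, Finsupp.sum_single_index (by simp)]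

lemma tfDq_apply {n : ℕ} (i : Fin n) (g : TF n) (x : TFIdx n) :
    tfDq i g x = tfSgn x * g (tfFlip x) * (x.2.1 i : ℝ) := by
  classical
  obtain ⟨ν, k, b⟩ := x
  rw [tfDq, Finsupp.sum_apply, Finsupp.sum]
  rw [show (∑ m ∈ g.support,
      (if m.2.2 then Finsupp.single (m.1, m.2.1, false) (-(g m * (m.2.1 i : ℝ)))
      else Finsupp.single (m.1, m.2.1, true) (g m * (m.2.1 i : ℝ))) (ν, k, b))
      = ∑ m ∈ g.support,
        (if m = (ν, k, !b) then tfSgn (ν, k, b) * g m * (k i : ℝ) else 0) from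
    Finset.sum_congr rfl fun m _ => by
      obtain ⟨ν', k', b'⟩ := m
      cases b' <;> cases b <;>
        simp_all [Finsupp.single_apply, tfSgn, Prod.ext_iff] <;>
        first
          | (rintro rfl rfl; ring)
          | (split_ifs <;> ring)]
  rw [Finset.sum_ite_eq' g.support ((ν, k, !b) : TFIdx n)
    (fun m => tfSgn (ν, k, b) * g m * (k i : ℝ))]
  by_cases h : ((ν, k, !b) : TFIdx n) ∈ g.support
  · simp [h, tfFlip]
  · simp [h, tfFlip, Finsupp.notMem_support_iff.mp h]

lemma natAbs_apply_le {n : ℕ} (k : Fin n →₀ ℤ) (i : Fin n) :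
    (k i).natAbs ≤ k.sum fun _ c => c.natAbs := by
  classical
  by_cases h : i ∈ k.support
  · exact Finset.single_le_sum (f := fun j => (k j).natAbs) (fun _ _ => Nat.zero_le _) h
  · simp [Finsupp.notMem_support_iff.mp h]

lemma nu_apply_le {n : ℕ} (ν : Fin n →₀ ℕ) (i : Fin n) :
    ν i ≤ ν.sum fun _ e => e := by
  classical
  by_cases h : i ∈ ν.support
  · exact Finset.single_le_sum (f := fun j => ν j) (fun _ _ => Nat.zero_le _) h
  · simp [Finsupp.notMem_support_iff.mp h]

/-- if |k·ω| ≥ α > 0 for all nonzero k with |k|₁ ≤ 2r, and f is linear in p,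
with zero angular average and trigonometric degree ≤ 2r, then the homological equation
{χ₂, ω·p} + f = 0, i.e. Σ_i ω_i ∂χ₂/∂q_i = −f, has a solution χ₂ linear in p, zero-mean, of
trigonometric degree ≤ 2r, with max_m ‖∂χ₂/∂p_m‖ ≤ ‖f‖/α and max_m ‖∂χ₂/∂q_m‖ ≤ 2r‖f‖/α. -/
theorem homological_equation_linear_in_actions {n : ℕ} (r : ℕ) (ω : Fin n → ℝ) (f : TF n)
    (α : ℝ) (hα : 0 < α)
    (hdiv : ∀ k : Fin n →₀ ℤ, k ≠ 0 → (k.sum fun _ c => c.natAbs) ≤ 2 * r →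
      α ≤ |∑ i, (k i : ℝ) * ω i|)
    (hf_p : ∀ m ∈ f.support, pdeg m = 1)
    (hf_mean : ∀ m ∈ f.support, m.2.1 ≠ 0)
    (hf_trig : ∀ m ∈ f.support, (m.2.1.sum fun _ c => c.natAbs) ≤ 2 * r) :
    ∃ χ₂ : TF n,
      (∀ m ∈ χ₂.support, pdeg m = 1) ∧ (∀ m ∈ χ₂.support, m.2.1 ≠ 0) ∧
      (∀ m ∈ χ₂.support, (m.2.1.sum fun _ c => c.natAbs) ≤ 2 * r) ∧
      (∑ i, ω i • tfDq i χ₂) = -f ∧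
      (∀ m : Fin n, tfNorm (tfDp m χ₂) ≤ tfNorm f / α) ∧
      (∀ m : Fin n, tfNorm (tfDq m χ₂) ≤ 2 * r * tfNorm f / α) := by
  classical
  set Ω : (Fin n →₀ ℤ) → ℝ := fun k => ∑ i, (k i : ℝ) * ω i with hΩ
  set χ₂ : TF n := Finsupp.onFinset (f.support.image tfFlip)
    (fun x => tfSgn x * f (tfFlip x) / Ω x.2.1)
    (fun x hx => by
      refine Finset.mem_image.mpr ⟨tfFlip x, ?_, tfFlip_flip x⟩
      refine Finsupp.mem_support_iff.mpr fun h0 => hx ?_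
      simp [h0]) with hχdef
  have hχval : ∀ x, χ₂ x = tfSgn x * f (tfFlip x) / Ω x.2.1 := fun x => rfl
  -- support facts
  have hsupp : ∀ m ∈ χ₂.support, tfFlip m ∈ f.support := by
    intro m hm
    refine Finsupp.mem_support_iff.mpr fun h0 => Finsupp.mem_support_iff.mp hm ?_
    rw [hχval, h0]; simp
  have hs1 : ∀ m ∈ χ₂.support, pdeg m = 1 := by
    intro m hm
    have := hf_p _ (hsupp m hm)
    simpa [pdeg, tfFlip] using this
  have hs2 : ∀ m ∈ χ₂.support, m.2.1 ≠ 0 := by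
    intro m hm
    have := hf_mean _ (hsupp m hm)
    simpa [tfFlip] using this
  have hs3 : ∀ m ∈ χ₂.support, (m.2.1.sum fun _ c => c.natAbs) ≤ 2 * r := by
    intro m hm
    have := hf_trig _ (hsupp m hm)
    simpa [tfFlip] using this
  -- divisor bound on support
  have hΩsupp : ∀ m ∈ χ₂.support, α ≤ |Ω m.2.1| := by
    intro m hm
    exact hdiv _ (hs2 m hm) (hs3 m hm)
  -- norm of χ₂
  have hχnorm : tfNorm χ₂ ≤ tfNorm f / α := by
    have h1 : tfNorm χ₂ = ∑ m ∈ χ₂.support, |χ₂ m| := rfl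
    have h2 : ∀ m ∈ χ₂.support, |χ₂ m| ≤ |f (tfFlip m)| / α := by
      intro m hm
      rw [hχval, abs_div, abs_mul, abs_tfSgn, one_mul]
      have hΩ0 : α ≤ |Ω m.2.1| := hΩsupp m hm
      gcongr
    calc tfNorm χ₂ ≤ ∑ m ∈ χ₂.support, |f (tfFlip m)| / α := by
          rw [h1]; exact Finset.sum_le_sum h2
      _ = (∑ m ∈ χ₂.support, |f (tfFlip m)|) / α := by rw [Finset.sum_div]
      _ ≤ tfNorm f / α := by
          gcongr
          rw [← Finset.sum_image (f := fun m => |f m|)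
            (fun x _ y _ h => tfFlip_inj h)]
          rw [tfNorm_eq_sum f (s := f.support ∪ χ₂.support.image tfFlip)
            Finset.subset_union_left]
          refine Finset.sum_le_sum_of_subset_of_nonneg ?_ (fun _ _ _ => abs_nonneg _)
          intro x hx
          exact Finset.mem_union_right _ hx
  have hfnn : 0 ≤ tfNorm f := tfNorm_nonneg f
  refine ⟨χ₂, hs1, hs2, hs3, ?_, ?_, ?_⟩
  · -- homological equation
    ext x
    rw [Finsupp.finset_sum_apply]
    have : ∀ i : Fin n, (ω i • tfDq i χ₂) x
        = tfSgn x * χ₂ (tfFlip x) * ((x.2.1 i : ℝ) * ω i) := by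
      intro i
      rw [Finsupp.smul_apply, smul_eq_mul, tfDq_apply]; ring
    rw [Finset.sum_congr rfl fun i _ => this i, ← Finset.mul_sum]
    have hflip : f (tfFlip (tfFlip x)) = f x := by rw [tfFlip_flip]
    by_cases hx : f x = 0
    · rw [hχval, hflip, hx]
      simp [hx]
    · have hxs : x ∈ f.support := Finsupp.mem_support_iff.mpr hx
      have hk0 : x.2.1 ≠ 0 := hf_mean x hxs
      have hΩne : Ω x.2.1 ≠ 0 := by
        have h2 := hdiv _ hk0 (hf_trig x hxs)
        rw [show (∑ i, (x.2.1 i : ℝ) * ω i) = Ω x.2.1 from rfl] at h2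
        intro h
        rw [h] at h2
        simp at h2
        linarith
      have hkk : (tfFlip x).2.1 = x.2.1 := rfl
      rw [hχval, hflip, hkk]
      have hsgn : tfSgn x * tfSgn (tfFlip x) = -1 := by
        obtain ⟨ν, k, b⟩ := x; cases b <;> simp [tfSgn, tfFlip]
      have : Ω x.2.1 = ∑ i, (x.2.1 i : ℝ) * ω i := rfl
      rw [← this]
      field_simp
      simp only [Finsupp.coe_neg, Pi.neg_apply]
      linear_combination f x * hsgn
  · -- tfDp bound
    intro j
    have hb : tfNorm (tfDp j χ₂) ≤ ∑ m ∈ χ₂.support, |χ₂ m| := by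
      refine le_trans (tfNorm_sum_le _ _) (Finset.sum_le_sum ?_)
      intro m hm
      refine le_trans (tfNorm_single_le _ _) ?_
      rw [abs_mul]
      have h1 : (m.1 j : ℝ) ≤ 1 := by
        have := le_trans (nu_apply_le m.1 j) (le_of_eq (hs1 m hm))
        exact_mod_cast this
      have h0 : (0:ℝ) ≤ (m.1 j : ℝ) := by positivity
      calc |χ₂ m| * |(m.1 j : ℝ)| ≤ |χ₂ m| * 1 := by
            rw [abs_of_nonneg h0]; exact mul_le_mul_of_nonneg_left h1 (abs_nonneg _)
        _ = |χ₂ m| := mul_one _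
    exact le_trans hb hχnorm
  · -- tfDq bound
    intro j
    have hb : tfNorm (tfDq j χ₂) ≤ ∑ m ∈ χ₂.support, |χ₂ m| * (2*r) := by
      refine le_trans (tfNorm_sum_le _ _) (Finset.sum_le_sum ?_)
      intro m hm
      have hk : |(m.2.1 j : ℝ)| ≤ 2*r := by
        have h1 : (m.2.1 j).natAbs ≤ 2*r := le_trans (natAbs_apply_le _ _) (hs3 m hm)
        calc |(m.2.1 j : ℝ)| = ((m.2.1 j).natAbs : ℝ) := by
              rw [Nat.cast_natAbs, Int.cast_abs]
          _ ≤ 2*r := by exact_mod_cast h1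
      have : tfNorm (if m.2.2 then Finsupp.single (m.1, m.2.1, false) (-(χ₂ m * (m.2.1 j : ℝ)))
          else Finsupp.single (m.1, m.2.1, true) (χ₂ m * (m.2.1 j : ℝ)))
          ≤ |χ₂ m| * |(m.2.1 j : ℝ)| := by
        split_ifs with hb
        · exact le_trans (tfNorm_single_le _ _) (le_of_eq (by rw [abs_neg, abs_mul]))
        · exact le_trans (tfNorm_single_le _ _) (le_of_eq (abs_mul _ _))
      refine le_trans this ?_
      exact mul_le_mul_of_nonneg_left hk (abs_nonneg _)
    rw [← Finset.sum_mul] at hb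
    calc tfNorm (tfDq j χ₂) ≤ tfNorm χ₂ * (2*r) := hb
      _ ≤ (tfNorm f / α) * (2*r) := by
          apply mul_le_mul_of_nonneg_right hχnorm (by positivity)
      _ = 2 * r * tfNorm f / α := by ring
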